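/- Let E be a finite-dimensional real inner product space, let J : E → E be a self-adjoint positive-definite linear operator, and let α > 0 and β > 0. Define the hyperelastic stress map S on the set B = {ε ∈ E : ‖J ε‖ < 1/β} by S(ε) = (1 − (β·‖J ε‖)^α)^(−1/α) • J(J ε). Then S is strictly monotone on B: for all ε₁, ε₂ ∈ B with ε₁ ≠ ε₂, the inner product ⟨S(ε₁) − S(ε₂), ε₁ − ε₂⟩ is strictly positive. -/
import Mathlib


open Real Filter Topology Set
open scoped RealInnerProductSpace

private lemma base_pos {α β s : ℝ} (hα : 0 < α) (hβ : 0 < β) (hs : 0 ≤ s)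
    (h : s < 1 / β) : 0 < 1 - (β * s) ^ α := by
  have hbs : β * s < 1 := by
    have := (lt_div_iff₀' hβ).mp h
    linarith
  have := Real.rpow_lt_one (mul_nonneg hβ.le hs) hbs hα
  linarith

private lemma psi_pos {α β s : ℝ} (hα : 0 < α) (hβ : 0 < β) (hs : 0 ≤ s)
    (h : s < 1 / β) : 0 < (1 - (β * s) ^ α) ^ (-1 / α) :=
  Real.rpow_pos_of_pos (base_pos hα hβ hs h) _

private lemma psi_mono {α β s t : ℝ} (hα : 0 < α) (hβ : 0 < β) (hs : 0 ≤ s)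
    (hst : s ≤ t) (ht : t < 1 / β) :
    (1 - (β * s) ^ α) ^ (-1 / α) ≤ (1 - (β * t) ^ α) ^ (-1 / α) := by
  have hbt : 0 < 1 - (β * t) ^ α := base_pos hα hβ (hs.trans hst) ht
  have hpow : (β * s) ^ α ≤ (β * t) ^ α :=
    Real.rpow_le_rpow (mul_nonneg hβ.le hs)
      (mul_le_mul_of_nonneg_left hst hβ.le) hα.le
  exact Real.rpow_le_rpow_of_nonpos hbt (by linarith)
    (by rw [neg_div]; exact neg_nonpos.mpr (by positivity))

/-- `f(s) = (1-(βs)^α)^(-1/α) * s` is strictly monotone on `[0, 1/β)`. -/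
private lemma f_strictMono {α β s t : ℝ} (hα : 0 < α) (hβ : 0 < β) (hs : 0 ≤ s)
    (hst : s < t) (ht : t < 1 / β) :
    (1 - (β * s) ^ α) ^ (-1 / α) * s < (1 - (β * t) ^ α) ^ (-1 / α) * t := by
  have hψt : 0 < (1 - (β * t) ^ α) ^ (-1 / α) := psi_pos hα hβ (hs.trans hst.le) ht
  calc (1 - (β * s) ^ α) ^ (-1 / α) * s
      ≤ (1 - (β * t) ^ α) ^ (-1 / α) * s :=
        mul_le_mul_of_nonneg_right (psi_mono hα hβ hs hst.le ht) hs
    _ < (1 - (β * t) ^ α) ^ (-1 / α) * t :=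
        mul_lt_mul_of_pos_left hst hψt

/-- With `J` a self-adjoint positive-definite operator (square root of the
elasticity tensor `𝔼 = J ∘ J`), the hyperelastic stress map
`S(ε) = (1 - (β ‖Jε‖)^α)^(-1/α) • J(Jε)` is strictly monotone on the set
`{ε : ‖Jε‖ < 1/β}`. -/
theorem hyperelastic_stress_strictly_monotone
    {E : Type*} [NormedAddCommGroup E] [InnerProductSpace ℝ E]
    [FiniteDimensional ℝ E]
    (J : E →L[ℝ] E) (hsym : ∀ x y : E, ⟪J x, y⟫ = ⟪x, J y⟫)
    (hpos : ∀ x : E, x ≠ 0 → 0 < ⟪J x, x⟫)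
    (α β : ℝ) (hα : 0 < α) (hβ : 0 < β)
    (ε₁ ε₂ : E) (h₁ : ‖J ε₁‖ < 1 / β) (h₂ : ‖J ε₂‖ < 1 / β) (hne : ε₁ ≠ ε₂) :
    0 < ⟪(1 - (β * ‖J ε₁‖) ^ α) ^ (-1 / α) • J (J ε₁) -
          (1 - (β * ‖J ε₂‖) ^ α) ^ (-1 / α) • J (J ε₂), ε₁ - ε₂⟫ := by
  set u := J ε₁ with hu
  set v := J ε₂ with hv
  set ψ₁ := (1 - (β * ‖u‖) ^ α) ^ (-1 / α) with hψ₁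
  set ψ₂ := (1 - (β * ‖v‖) ^ α) ^ (-1 / α) with hψ₂
  have hψ₁pos : 0 < ψ₁ := psi_pos hα hβ (norm_nonneg _) h₁
  have hψ₂pos : 0 < ψ₂ := psi_pos hα hβ (norm_nonneg _) h₂
  -- J is injective on ε₁ - ε₂
  have huv : u ≠ v := by
    intro h
    have hd : ε₁ - ε₂ ≠ 0 := sub_ne_zero.mpr hne
    have hz : J (ε₁ - ε₂) = 0 := by
      rw [map_sub]; rw [hu, hv] at h; rw [h, sub_self]
    have hp := hpos (ε₁ - ε₂) hd
    rw [hz, inner_zero_left] at hp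
    exact lt_irrefl _ hp
  -- expand the inner product
  have hJu1 : ⟪J u, ε₁⟫ = ‖u‖ ^ 2 := by
    rw [hsym, ← hu, real_inner_self_eq_norm_sq]
  have hJu2 : ⟪J u, ε₂⟫ = ⟪u, v⟫ := by rw [hsym, ← hv]
  have hJv1 : ⟪J v, ε₁⟫ = ⟪u, v⟫ := by
    rw [hsym, ← hu, real_inner_comm]
  have hJv2 : ⟪J v, ε₂⟫ = ‖v‖ ^ 2 := by
    rw [hsym, ← hv, real_inner_self_eq_norm_sq]
  have hexp : ⟪ψ₁ • J u - ψ₂ • J v, ε₁ - ε₂⟫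
      = ψ₁ * ‖u‖ ^ 2 + ψ₂ * ‖v‖ ^ 2 - (ψ₁ + ψ₂) * ⟪u, v⟫ := by
    rw [inner_sub_left, inner_sub_right, inner_sub_right,
      real_inner_smul_left, real_inner_smul_left, real_inner_smul_left,
      real_inner_smul_left, hJu1, hJu2, hJv1, hJv2]
    ring
  rw [hexp]
  have hCS : ⟪u, v⟫ ≤ ‖u‖ * ‖v‖ := real_inner_le_norm u v
  rcases eq_or_ne ‖u‖ ‖v‖ with hnorm | hnorm
  · -- equal norms: ψ₁ = ψ₂, expression = ψ₁ * ‖u - v‖²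
    have hψeq : ψ₁ = ψ₂ := by rw [hψ₁, hψ₂, hnorm]
    have hkey : ψ₁ * ‖u‖ ^ 2 + ψ₂ * ‖v‖ ^ 2 - (ψ₁ + ψ₂) * ⟪u, v⟫
        = ψ₁ * ‖u - v‖ ^ 2 := by
      rw [norm_sub_sq_real, hψeq]; ring
    rw [hkey]
    have : 0 < ‖u - v‖ ^ 2 := by
      exact pow_pos (norm_pos_iff.mpr (sub_ne_zero.mpr huv)) 2
    exact mul_pos hψ₁pos this
  · -- distinct norms: use strict monotonicity of f
    have hmain : 0 < (ψ₁ * ‖u‖ - ψ₂ * ‖v‖) * (‖u‖ - ‖v‖) := by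
      rcases lt_or_gt_of_ne hnorm with h | h
      · have := f_strictMono hα hβ (norm_nonneg u) h h₂
        rw [← hψ₁, ← hψ₂] at this
        exact mul_pos_of_neg_of_neg (by linarith) (by linarith)
      · have := f_strictMono hα hβ (norm_nonneg v) h h₁
        rw [← hψ₁, ← hψ₂] at this
        exact mul_pos (by linarith) (by linarith)
    nlinarith [mul_nonneg (add_pos hψ₁pos hψ₂pos).le (sub_nonneg.mpr hCS)]
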